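/- L is the unique metric normalized ℝ-mold: if (μ_i) is an ℝ-mold with μ₁ = 1 that is metric, then μ_i = log₂(i+1) for all i ∈ ℕ. -/

import Mathlib

/-- An `ℝ`-mold: a strictly increasing sequence of nonnegative reals starting at `0`,
whose consecutive differences become arbitrarily small, closed under addition. -/
def IsRMold (μ : ℕ → ℝ) : Prop :=
  StrictMono μ ∧ (∀ i, 0 ≤ μ i) ∧ μ 0 = 0 ∧
    (∀ ε : ℝ, 0 < ε → ∃ n₀ : ℕ, ∀ n ≥ n₀, μ (n + 1) - μ n < ε) ∧
    (∀ i j : ℕ, ∃ k : ℕ, μ k = μ i + μ j)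

/-- A mold is metric if `μ_{ab-1} = μ_{a-1} + μ_{b-1}` for all positive integers `a, b`. -/
def IsMetric (μ : ℕ → ℝ) : Prop :=
  ∀ a b : ℕ, 0 < a → 0 < b → μ (a * b - 1) = μ (a - 1) + μ (b - 1)

/-- `L` is the unique metric normalized ℝ-mold. -/
theorem metric_normalized_mold_unique (μ : ℕ → ℝ)
    (hmold : IsRMold μ) (hnorm : μ 1 = 1) (hmetric : IsMetric μ) :
    ∀ i : ℕ, μ i = Real.logb 2 (i + 1) := by
  obtain ⟨hsm, _, h0, _, _⟩ := hmold
  have hmono := hsm.monotone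
  -- power lemma
  have hpow : ∀ (k a : ℕ), 0 < a → μ (a ^ k - 1) = k * μ (a - 1) := by
    intro k a ha
    induction k with
    | zero => simp [h0]
    | succ k ih =>
      have h1 : μ (a ^ k * a - 1) = μ (a ^ k - 1) + μ (a - 1) :=
        hmetric (a ^ k) a (pow_pos ha k) ha
      rw [pow_succ, h1, ih]
      push_cast; ring
  intro i
  set n : ℕ := i + 1 with hn
  have hn1 : 1 ≤ n := Nat.le_add_left 1 i
  have hni : n - 1 = i := rfl
  have hnpos : (0:ℝ) < n := by exact_mod_cast hn1
  set L : ℝ := Real.logb 2 (n : ℝ) with hL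
  have hLnn : 0 ≤ L := Real.logb_nonneg one_lt_two (by exact_mod_cast hn1)
  have hrpow : (2:ℝ) ^ L = n := Real.rpow_logb two_pos (by norm_num) hnpos
  -- key estimate for each k ≥ 1
  have key : ∀ k : ℕ, 0 < k → |μ i - L| ≤ 1 / k := by
    intro k hk
    set m : ℕ := ⌊(k : ℝ) * L⌋₊ with hm
    have hmle : (m : ℝ) ≤ k * L := Nat.floor_le (by positivity)
    have hmlt : (k : ℝ) * L < m + 1 := Nat.lt_floor_add_one _
    -- 2^m ≤ n^k
    have h2m : (2:ℕ) ^ m ≤ n ^ k := by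
      have : ((2:ℝ)) ^ (m:ℝ) ≤ (2:ℝ) ^ ((k:ℝ) * L) :=
        Real.rpow_le_rpow_of_exponent_le one_le_two hmle
      have heq : (2:ℝ) ^ ((k:ℝ) * L) = (n:ℝ) ^ k := by
        rw [mul_comm, Real.rpow_mul (by norm_num), hrpow, Real.rpow_natCast]
      rw [heq, Real.rpow_natCast] at this
      exact_mod_cast this
    -- n^k ≤ 2^(m+1)
    have hnk : n ^ k ≤ (2:ℕ) ^ (m + 1) := by
      have : (2:ℝ) ^ ((k:ℝ) * L) ≤ (2:ℝ) ^ ((m:ℝ) + 1) :=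
        Real.rpow_le_rpow_of_exponent_le one_le_two hmlt.le
      have heq : (2:ℝ) ^ ((k:ℝ) * L) = (n:ℝ) ^ k := by
        rw [mul_comm, Real.rpow_mul (by norm_num), hrpow, Real.rpow_natCast]
      have h2 : (2:ℝ) ^ ((m:ℝ) + 1) = ((2:ℕ):ℝ) ^ (m+1) := by
        push_cast
        rw [← Real.rpow_natCast 2 (m+1)]
        push_cast; ring_nf
      rw [heq, h2] at this
      exact_mod_cast this
    have hμ2m : μ (2 ^ m - 1) = m := by
      have := hpow m 2 two_pos
      simpa [hnorm] using this
    have hμ2m1 : μ (2 ^ (m+1) - 1) = m + 1 := by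
      have := hpow (m+1) 2 two_pos
      simp [hnorm] at this
      linarith [this]
    have hμnk : μ (n ^ k - 1) = k * μ i := by
      have := hpow k n (by omega)
      rwa [hni] at this
    have lo : (m:ℝ) ≤ k * μ i := by
      have := hmono (Nat.sub_le_sub_right h2m 1)
      rw [hμ2m, hμnk] at this; exact this
    have hi : (k:ℝ) * μ i ≤ m + 1 := by
      have := hmono (Nat.sub_le_sub_right hnk 1)
      rw [hμ2m1, hμnk] at this; exact this
    have hkpos : (0:ℝ) < k := by exact_mod_cast hk
    have h1 : (k:ℝ) * (μ i - L) ≤ 1 := by nlinarith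
    have h2 : -1 ≤ (k:ℝ) * (μ i - L) := by nlinarith
    have habs : |(k:ℝ) * (μ i - L)| ≤ 1 := abs_le.mpr ⟨h2, h1⟩
    calc |μ i - L| = |(k:ℝ) * (μ i - L)| / k := by
          rw [abs_mul, abs_of_pos hkpos, mul_div_cancel_left₀ _ hkpos.ne']
      _ ≤ 1 / k := by gcongr
  -- conclude
  have : μ i = L := by
    by_contra h
    have habs : 0 < |μ i - L| := abs_pos.mpr (sub_ne_zero.mpr h)
    obtain ⟨k, hk⟩ := exists_nat_one_div_lt habs
    have := key (k+1) (Nat.succ_pos k)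
    push_cast at this hk
    linarith
  rw [this, hL]
  push_cast
  ring_nf
  simp [hn, add_comm]
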